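/- Let d ≥ 3, let Ω ⊆ ℝ^d be open, and let σ₁, σ₂ : Ω → ℝ be C^∞ with σ₂ = σ₁ · v for a C^∞ function v : Ω → ℝ that is everywhere strictly positive. Define S(σ) := ‖∇σ‖² − (2/d)·σ·Δσ, and suppose that for i = 1, 2 there are C^∞ functions B_i with S(σ_i)(x) = 1 + σ_i(x)^d · B_i(x) for all x ∈ Ω (both σ₁ and σ₂ are conformal unit defining densities). Then there exists a C^∞ function φ : Ω → ℝ such that σ₂ = σ₁ + σ₁^(d+1) · φ. -/

import Mathlib

/-- The Euclidean Laplacian of `f : ℝ^d → ℝ` at `x`: the trace of the second derivative. -/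
noncomputable def euclideanLaplacian {d : ℕ} (f : EuclideanSpace ℝ (Fin d) → ℝ)
    (x : EuclideanSpace ℝ (Fin d)) : ℝ :=
  ∑ i : Fin d, iteratedFDeriv ℝ 2 f x ![EuclideanSpace.single i 1, EuclideanSpace.single i 1]

/-- The flat-background singular Yamabe operator `S(σ) = ‖∇σ‖² - (2/d)·σ·Δσ`. -/
noncomputable def singularYamabeS {d : ℕ} (σ : EuclideanSpace ℝ (Fin d) → ℝ)
    (x : EuclideanSpace ℝ (Fin d)) : ℝ :=
  ‖gradient σ x‖ ^ 2 - (2 / (d : ℝ)) * σ x * euclideanLaplacian σ x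

/-! ### Auxiliary infrastructure: coordinate partial derivatives -/

/-- The `i`-th partial derivative. -/
noncomputable def pdY {d : ℕ} (i : Fin d) (f : EuclideanSpace ℝ (Fin d) → ℝ)
    (x : EuclideanSpace ℝ (Fin d)) : ℝ :=
  fderiv ℝ f x (EuclideanSpace.single i 1)

section InfraY

variable {d : ℕ} {Ω : Set (EuclideanSpace ℝ (Fin d))}
  {f g : EuclideanSpace ℝ (Fin d) → ℝ} {x : EuclideanSpace ℝ (Fin d)} {i : Fin d}

theorem diffAtY (hΩ : IsOpen Ω) (hf : ContDiffOn ℝ (⊤ : ℕ∞) f Ω) (hx : x ∈ Ω) :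
    DifferentiableAt ℝ f x :=
  (hf.contDiffAt (hΩ.mem_nhds hx)).differentiableAt (by simp)

theorem pdY_contDiffOn (hΩ : IsOpen Ω) (hf : ContDiffOn ℝ (⊤ : ℕ∞) f Ω) :
    ContDiffOn ℝ (⊤ : ℕ∞) (pdY i f) Ω :=
  (hf.fderiv_of_isOpen hΩ (by simp)).clm_apply contDiffOn_const

theorem pdY_congr (hΩ : IsOpen Ω) (h : ∀ y ∈ Ω, f y = g y) (hx : x ∈ Ω) :
    pdY i f x = pdY i g x := by
  unfold pdY
  congr 1
  apply Filter.EventuallyEq.fderiv_eq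
  filter_upwards [hΩ.mem_nhds hx] with y hy using h y hy

theorem pdY_add (hf : DifferentiableAt ℝ f x) (hg : DifferentiableAt ℝ g x) :
    pdY i (fun y => f y + g y) x = pdY i f x + pdY i g x := by
  unfold pdY; rw [fderiv_fun_add hf hg]; simp

theorem pdY_const_add (c : ℝ) :
    pdY i (fun y => c + f y) x = pdY i f x := by
  unfold pdY; rw [fderiv_const_add]

theorem pdY_mul (hf : DifferentiableAt ℝ f x) (hg : DifferentiableAt ℝ g x) :
    pdY i (fun y => f y * g y) x = f x * pdY i g x + g x * pdY i f x := by
  unfold pdY; rw [fderiv_fun_mul hf hg]; simp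

theorem pdY_pow_mul (hΩ : IsOpen Ω) (hf : ContDiffOn ℝ (⊤ : ℕ∞) f Ω)
    (hg : ContDiffOn ℝ (⊤ : ℕ∞) g Ω) (m : ℕ) (hx : x ∈ Ω) :
    pdY i (fun y => f y ^ (m+1) * g y) x
      = f x ^ m * (((m:ℝ)+1) * g x * pdY i f x + f x * pdY i g x) := by
  induction m with
  | zero =>
    have h1 : pdY i (fun y => f y ^ (0+1) * g y) x = pdY i (fun y => f y * g y) x := by
      simp only [zero_add, pow_one]
    rw [h1, pdY_mul (diffAtY hΩ hf hx) (diffAtY hΩ hg hx)]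
    push_cast; ring
  | succ n ih =>
    have hfg : ContDiffOn ℝ (⊤ : ℕ∞) (fun y => f y ^ (n+1) * g y) Ω := (hf.pow _).mul hg
    have h1 : pdY i (fun y => f y ^ (n+1+1) * g y) x
        = pdY i (fun y => f y * (f y ^ (n+1) * g y)) x :=
      pdY_congr hΩ (fun y _ => by ring) hx
    rw [h1, pdY_mul (diffAtY hΩ hf hx) (diffAtY hΩ hfg hx), ih, pow_succ]
    push_cast; ring

theorem pdY_pow_mul' (hΩ : IsOpen Ω) (hf : ContDiffOn ℝ (⊤ : ℕ∞) f Ω)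
    (hg : ContDiffOn ℝ (⊤ : ℕ∞) g Ω) (m : ℕ) (hx : x ∈ Ω) :
    f x * pdY i (fun y => f y ^ m * g y) x
      = f x ^ m * ((m:ℝ) * g x * pdY i f x + f x * pdY i g x) := by
  cases m with
  | zero =>
    have h1 : pdY i (fun y => f y ^ 0 * g y) x = pdY i g x :=
      pdY_congr hΩ (fun y _ => by ring) hx
    rw [h1]; push_cast; ring
  | succ n =>
    rw [pdY_pow_mul hΩ hf hg n hx, pow_succ]
    push_cast; ring

theorem gradY_eq (hf : DifferentiableAt ℝ f x) :
    ‖gradient f x‖ ^ 2 = ∑ i : Fin d, (pdY i f x) ^ 2 := by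
  have h1 : ∀ i : Fin d, gradient f x i = pdY i f x := by
    intro i
    have h2 : (inner ℝ (gradient f x) (EuclideanSpace.single i (1:ℝ)) : ℝ)
        = fderiv ℝ f x (EuclideanSpace.single i 1) := by
      rw [gradient, InnerProductSpace.toDual_symm_apply]
    rw [EuclideanSpace.inner_single_right] at h2
    simpa [pdY] using h2
  rw [← real_inner_self_eq_norm_sq, PiLp.inner_apply]
  refine Finset.sum_congr rfl fun i _ => ?_
  rw [h1 i, RCLike.inner_apply, starRingEnd_apply, star_trivial, sq]

theorem lapY_eq (hΩ : IsOpen Ω) (hf : ContDiffOn ℝ (⊤ : ℕ∞) f Ω) (hx : x ∈ Ω) :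
    euclideanLaplacian f x = ∑ i : Fin d, pdY i (pdY i f) x := by
  unfold euclideanLaplacian
  refine Finset.sum_congr rfl fun i _ => ?_
  have hc2 : ContDiffOn ℝ (⊤ : ℕ∞) (fderiv ℝ f) Ω := hf.fderiv_of_isOpen hΩ (by simp)
  have hdf : DifferentiableAt ℝ (fderiv ℝ f) x :=
    (hc2.contDiffAt (hΩ.mem_nhds hx)).differentiableAt (by simp)
  have e1 : iteratedFDeriv ℝ 2 f x ![EuclideanSpace.single i 1, EuclideanSpace.single i 1]
      = fderiv ℝ (fderiv ℝ f) x (EuclideanSpace.single i 1) (EuclideanSpace.single i 1) := by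
    rw [iteratedFDeriv_two_apply]
    simp
  have e2 : pdY i (pdY i f) x
      = fderiv ℝ (fderiv ℝ f) x (EuclideanSpace.single i 1) (EuclideanSpace.single i 1) := by
    unfold pdY
    have e3 : fderiv ℝ (fun y => (fderiv ℝ f y) ((fun _ => EuclideanSpace.single i (1:ℝ)) y)) x
        = ((fderiv ℝ f x).comp (fderiv ℝ (fun _ => EuclideanSpace.single i (1:ℝ)) x))
          + (fderiv ℝ (fderiv ℝ f) x).flip (EuclideanSpace.single i 1) :=
      fderiv_clm_apply hdf (differentiableAt_const _)
    simp only [fderiv_fun_const, Pi.zero_apply, ContinuousLinearMap.comp_zero, zero_add] at e3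
    rw [e3]
    rfl
  rw [e1, e2]

theorem SY_eq (hΩ : IsOpen Ω) (hf : ContDiffOn ℝ (⊤ : ℕ∞) f Ω) (hx : x ∈ Ω) :
    singularYamabeS f x
      = (∑ i : Fin d, (pdY i f x) ^ 2)
        - 2 / (d : ℝ) * f x * ∑ i : Fin d, pdY i (pdY i f) x := by
  unfold singularYamabeS
  rw [gradY_eq (diffAtY hΩ hf hx), lapY_eq hΩ hf hx]

end InfraY

/-! ### Base case: `v = 1 + σ₁·w₁` -/

theorem yamabe_base {d : ℕ} (hd : 3 ≤ d) {Ω : Set (EuclideanSpace ℝ (Fin d))} (hΩ : IsOpen Ω)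
    {σ₁ σ₂ v B₁ B₂ : EuclideanSpace ℝ (Fin d) → ℝ}
    (hσ₁ : ContDiffOn ℝ (⊤ : ℕ∞) σ₁ Ω) (hσ₂ : ContDiffOn ℝ (⊤ : ℕ∞) σ₂ Ω)
    (hv : ContDiffOn ℝ (⊤ : ℕ∞) v Ω) (hvpos : ∀ x ∈ Ω, 0 < v x)
    (hfac : ∀ x ∈ Ω, σ₂ x = σ₁ x * v x)
    (hB₁ : ContDiffOn ℝ (⊤ : ℕ∞) B₁ Ω) (hB₂ : ContDiffOn ℝ (⊤ : ℕ∞) B₂ Ω)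
    (h₁ : ∀ x ∈ Ω, singularYamabeS σ₁ x = 1 + σ₁ x ^ d * B₁ x)
    (h₂ : ∀ x ∈ Ω, singularYamabeS σ₂ x = 1 + σ₂ x ^ d * B₂ x) :
    ∃ w : EuclideanSpace ℝ (Fin d) → ℝ, ContDiffOn ℝ (⊤ : ℕ∞) w Ω ∧
      ∀ x ∈ Ω, v x = 1 + σ₁ x ^ 1 * w x := by
  refine ⟨fun y =>
    (σ₁ y ^ (d-1) * (v y ^ d * B₂ y - v y ^ 2 * B₁ y)
      - 2*(1-2/(d:ℝ)) * v y * (∑ i : Fin d, pdY i σ₁ y * pdY i v y)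
      - σ₁ y * (∑ i : Fin d, (pdY i v y) ^ 2)
      + 2/(d:ℝ) * σ₁ y * v y * (∑ i : Fin d, pdY i (pdY i v) y)) / (v y + 1), ?_, ?_⟩
  · have hSpa : ContDiffOn ℝ (⊤ : ℕ∞) (fun y => ∑ i : Fin d, pdY i σ₁ y * pdY i v y) Ω :=
      ContDiffOn.sum fun i _ => (pdY_contDiffOn hΩ hσ₁).mul (pdY_contDiffOn hΩ hv)
    have hSaa : ContDiffOn ℝ (⊤ : ℕ∞) (fun y => ∑ i : Fin d, (pdY i v y) ^ 2) Ω :=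
      ContDiffOn.sum fun i _ => (pdY_contDiffOn hΩ hv).pow 2
    have hSda : ContDiffOn ℝ (⊤ : ℕ∞) (fun y => ∑ i : Fin d, pdY i (pdY i v) y) Ω :=
      ContDiffOn.sum fun i _ => pdY_contDiffOn hΩ (pdY_contDiffOn hΩ hv)
    have hne : ∀ y ∈ Ω, v y + 1 ≠ 0 := fun y hy => by have := hvpos y hy; linarith
    fun_prop (disch := assumption)
  · intro x hx
    have hp2 : ∀ i, ∀ y ∈ Ω, pdY i σ₂ y = σ₁ y * pdY i v y + v y * pdY i σ₁ y := by
      intro i y hy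
      rw [pdY_congr hΩ hfac hy, pdY_mul (diffAtY hΩ hσ₁ hy) (diffAtY hΩ hv hy)]
    have hdd : ∀ i, pdY i (pdY i σ₂) x
        = v x * pdY i (pdY i σ₁) x + 2 * (pdY i σ₁ x * pdY i v x)
          + σ₁ x * pdY i (pdY i v) x := by
      intro i
      have h1 : pdY i (pdY i σ₂) x
          = pdY i (fun y => σ₁ y * pdY i v y + v y * pdY i σ₁ y) x :=
        pdY_congr hΩ (hp2 i) hx
      rw [h1, pdY_add (diffAtY hΩ (hσ₁.mul (pdY_contDiffOn hΩ hv)) hx)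
          (diffAtY hΩ (hv.mul (pdY_contDiffOn hΩ hσ₁)) hx),
        pdY_mul (diffAtY hΩ hσ₁ hx) (diffAtY hΩ (pdY_contDiffOn hΩ hv) hx),
        pdY_mul (diffAtY hΩ hv hx) (diffAtY hΩ (pdY_contDiffOn hΩ hσ₁) hx)]
      ring
    have hsum1 : (∑ i : Fin d, (pdY i σ₂ x) ^ 2)
        = v x ^ 2 * (∑ i : Fin d, (pdY i σ₁ x) ^ 2)
          + 2 * v x * σ₁ x * (∑ i : Fin d, pdY i σ₁ x * pdY i v x)
          + σ₁ x ^ 2 * (∑ i : Fin d, (pdY i v x) ^ 2) := by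
      calc (∑ i : Fin d, (pdY i σ₂ x) ^ 2)
          = ∑ i : Fin d, (σ₁ x * pdY i v x + v x * pdY i σ₁ x) ^ 2 :=
            Finset.sum_congr rfl fun i _ => by rw [hp2 i x hx]
        _ = _ := by
            simp only [Finset.mul_sum, ← Finset.sum_add_distrib]
            try exact Finset.sum_congr rfl fun i _ => by ring
    have hsum2 : (∑ i : Fin d, pdY i (pdY i σ₂) x)
        = v x * (∑ i : Fin d, pdY i (pdY i σ₁) x)
          + 2 * (∑ i : Fin d, pdY i σ₁ x * pdY i v x)
          + σ₁ x * (∑ i : Fin d, pdY i (pdY i v) x) := by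
      calc (∑ i : Fin d, pdY i (pdY i σ₂) x)
          = ∑ i : Fin d, (v x * pdY i (pdY i σ₁) x + 2 * (pdY i σ₁ x * pdY i v x)
              + σ₁ x * pdY i (pdY i v) x) :=
            Finset.sum_congr rfl fun i _ => hdd i
        _ = _ := by
            simp only [Finset.mul_sum, ← Finset.sum_add_distrib]
            try exact Finset.sum_congr rfl fun i _ => by ring
    have hS1 : (∑ i : Fin d, (pdY i σ₁ x) ^ 2)
        - 2 / (d : ℝ) * σ₁ x * (∑ i : Fin d, pdY i (pdY i σ₁) x) = 1 + σ₁ x ^ d * B₁ x := by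
      have h := h₁ x hx
      rw [SY_eq hΩ hσ₁ hx] at h
      exact h
    have hS2 : (∑ i : Fin d, (pdY i σ₂ x) ^ 2)
        - 2 / (d : ℝ) * σ₂ x * (∑ i : Fin d, pdY i (pdY i σ₂) x) = 1 + σ₂ x ^ d * B₂ x := by
      have h := h₂ x hx
      rw [SY_eq hΩ hσ₂ hx] at h
      exact h
    rw [hsum1, hsum2, hfac x hx, mul_pow] at hS2
    obtain ⟨Vd, hVd⟩ : ∃ t : ℝ, v x ^ d = t := ⟨_, rfl⟩
    rw [hVd] at hS2
    have e2b : σ₁ x ^ d = σ₁ x * σ₁ x ^ (d-1) := by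
      rw [← pow_succ']
      congr 1
      omega
    rw [e2b] at hS1 hS2
    have hkey : v x ^ 2 - 1 = σ₁ x *
        (σ₁ x ^ (d-1) * (Vd * B₂ x - v x ^ 2 * B₁ x)
          - 2*(1-2/(d:ℝ)) * v x * (∑ i : Fin d, pdY i σ₁ x * pdY i v x)
          - σ₁ x * (∑ i : Fin d, (pdY i v x) ^ 2)
          + 2/(d:ℝ) * σ₁ x * v x * (∑ i : Fin d, pdY i (pdY i v) x)) := by
      linear_combination hS2 - (v x)^2 * hS1
    have hv1 : v x + 1 ≠ 0 := by have := hvpos x hx; linarith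
    beta_reduce
    rw [hVd, pow_one]
    have hrw : σ₁ x *
        ((σ₁ x ^ (d-1) * (Vd * B₂ x - v x ^ 2 * B₁ x)
          - 2*(1-2/(d:ℝ)) * v x * (∑ i : Fin d, pdY i σ₁ x * pdY i v x)
          - σ₁ x * (∑ i : Fin d, (pdY i v x) ^ 2)
          + 2/(d:ℝ) * σ₁ x * v x * (∑ i : Fin d, pdY i (pdY i v) x)) / (v x + 1))
        = v x - 1 := by
      rw [← mul_div_assoc, div_eq_iff hv1]
      linear_combination -hkey
    rw [hrw]
    ring

/-! ### Induction step -/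

/-- The coefficient function appearing in the first derivative of `σ₁^(m+1)·w`. -/
noncomputable def WfY {d : ℕ} (m : ℕ) (σ₁ w : EuclideanSpace ℝ (Fin d) → ℝ) (i : Fin d) :
    EuclideanSpace ℝ (Fin d) → ℝ :=
  fun z => ((m:ℝ)+1) * w z * pdY i σ₁ z + σ₁ z * pdY i w z

theorem yamabe_step {d : ℕ} (hd : 3 ≤ d) (m : ℕ) (hm : m + 2 ≤ d)
    {Ω : Set (EuclideanSpace ℝ (Fin d))} (hΩ : IsOpen Ω)
    {σ₁ σ₂ v B₁ B₂ w : EuclideanSpace ℝ (Fin d) → ℝ}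
    (hσ₁ : ContDiffOn ℝ (⊤ : ℕ∞) σ₁ Ω) (hσ₂ : ContDiffOn ℝ (⊤ : ℕ∞) σ₂ Ω)
    (hv : ContDiffOn ℝ (⊤ : ℕ∞) v Ω)
    (hfac : ∀ x ∈ Ω, σ₂ x = σ₁ x * v x)
    (hB₁ : ContDiffOn ℝ (⊤ : ℕ∞) B₁ Ω) (hB₂ : ContDiffOn ℝ (⊤ : ℕ∞) B₂ Ω)
    (h₁ : ∀ x ∈ Ω, singularYamabeS σ₁ x = 1 + σ₁ x ^ d * B₁ x)
    (h₂ : ∀ x ∈ Ω, singularYamabeS σ₂ x = 1 + σ₂ x ^ d * B₂ x)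
    (hw : ContDiffOn ℝ (⊤ : ℕ∞) w Ω)
    (hvw : ∀ x ∈ Ω, v x = 1 + σ₁ x ^ (m+1) * w x) :
    ∃ w' : EuclideanSpace ℝ (Fin d) → ℝ, ContDiffOn ℝ (⊤ : ℕ∞) w' Ω ∧
      ∀ x ∈ Ω, v x = 1 + σ₁ x ^ (m+2) * w' x := by
  have hWf : ∀ i, ContDiffOn ℝ (⊤ : ℕ∞) (WfY m σ₁ w i) Ω := by
    intro i
    unfold WfY
    exact ((contDiffOn_const.mul hw).mul (pdY_contDiffOn hΩ hσ₁)).add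
      (hσ₁.mul (pdY_contDiffOn hΩ hw))
  refine ⟨fun y =>
    -((1 + σ₁ y ^ m * σ₁ y * w y) *
        (-(2/(d:ℝ)) * (∑ i : Fin d, pdY i (WfY m σ₁ w i) y)
          + (2-2/(d:ℝ)*((m:ℝ)+2)) * (∑ i : Fin d, pdY i σ₁ y * pdY i w y)
          + ((m:ℝ)+1)*(2-2/(d:ℝ)*((m:ℝ)+2))*(2/(d:ℝ)) * w y
            * (∑ i : Fin d, pdY i (pdY i σ₁) y))
      + σ₁ y ^ (d-m-2) * (B₁ y - v y ^ d * B₂ y)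
      + σ₁ y ^ m * (∑ i : Fin d, (WfY m σ₁ w i y) ^ 2)
      + (((m:ℝ)+1)*(2-2/(d:ℝ)*((m:ℝ)+2))+1) * σ₁ y ^ m * w y ^ 2
          * (1 + σ₁ y ^ 2 * σ₁ y ^ m * σ₁ y ^ (d-m-2) * B₁ y)
      + ((m:ℝ)+2)*(2-2/(d:ℝ)*((m:ℝ)+1)) * σ₁ y * σ₁ y ^ m * σ₁ y ^ (d-m-2) * w y * B₁ y)
    / (2 + 2*((m:ℝ)+1) - 2/(d:ℝ)*((m:ℝ)+2)*((m:ℝ)+1)), ?_, ?_⟩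
  · -- smoothness
    have hS1 : ContDiffOn ℝ (⊤ : ℕ∞) (fun y => ∑ i : Fin d, pdY i (WfY m σ₁ w i) y) Ω :=
      ContDiffOn.sum fun i _ => pdY_contDiffOn hΩ (hWf i)
    have hS2 : ContDiffOn ℝ (⊤ : ℕ∞) (fun y => ∑ i : Fin d, pdY i σ₁ y * pdY i w y) Ω :=
      ContDiffOn.sum fun i _ => (pdY_contDiffOn hΩ hσ₁).mul (pdY_contDiffOn hΩ hw)
    have hS3 : ContDiffOn ℝ (⊤ : ℕ∞) (fun y => ∑ i : Fin d, pdY i (pdY i σ₁) y) Ω :=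
      ContDiffOn.sum fun i _ => pdY_contDiffOn hΩ (pdY_contDiffOn hΩ hσ₁)
    have hS4 : ContDiffOn ℝ (⊤ : ℕ∞) (fun y => ∑ i : Fin d, (WfY m σ₁ w i y) ^ 2) Ω :=
      ContDiffOn.sum fun i _ => (hWf i).pow 2
    have hdR : (3:ℝ) ≤ (d:ℝ) := by exact_mod_cast hd
    have hmR : (m:ℝ) + 2 ≤ (d:ℝ) := by exact_mod_cast hm
    have hd0 : (0:ℝ) < (d:ℝ) := by linarith
    have hm0 : (0:ℝ) ≤ (m:ℝ) := Nat.cast_nonneg m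
    have hle : 2/(d:ℝ)*((m:ℝ)+2)*((m:ℝ)+1) ≤ 2*((m:ℝ)+1) := by
      rw [div_mul_eq_mul_div, div_mul_eq_mul_div, div_le_iff₀ hd0]
      nlinarith
    have hc0 : (2 + 2*((m:ℝ)+1) - 2/(d:ℝ)*((m:ℝ)+2)*((m:ℝ)+1)) ≠ 0 := by
      intro h; nlinarith
    have hc0' : ∀ y ∈ Ω, (2 + 2*((m:ℝ)+1) - 2/(d:ℝ)*((m:ℝ)+2)*((m:ℝ)+1)) ≠ 0 :=
      fun y _ => hc0
    fun_prop (disch := assumption)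
  · intro x hx
    have hdR : (3:ℝ) ≤ (d:ℝ) := by exact_mod_cast hd
    have hmR : (m:ℝ) + 2 ≤ (d:ℝ) := by exact_mod_cast hm
    have hd0 : (0:ℝ) < (d:ℝ) := by linarith
    have hm0 : (0:ℝ) ≤ (m:ℝ) := Nat.cast_nonneg m
    have hle : 2/(d:ℝ)*((m:ℝ)+2)*((m:ℝ)+1) ≤ 2*((m:ℝ)+1) := by
      rw [div_mul_eq_mul_div, div_mul_eq_mul_div, div_le_iff₀ hd0]
      nlinarith
    have hc0 : (2 + 2*((m:ℝ)+1) - 2/(d:ℝ)*((m:ℝ)+2)*((m:ℝ)+1)) ≠ 0 := by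
      intro h; nlinarith
    -- first derivative of v
    have hpv : ∀ i, ∀ y ∈ Ω, pdY i v y = σ₁ y ^ m * WfY m σ₁ w i y := by
      intro i y hy
      have h1 : pdY i v y = pdY i (fun z => 1 + σ₁ z ^ (m+1) * w z) y :=
        pdY_congr hΩ hvw hy
      rw [h1, pdY_const_add, pdY_pow_mul hΩ hσ₁ hw m hy]
      rfl
    -- first derivative of σ₂
    have hp2 : ∀ i, ∀ y ∈ Ω, pdY i σ₂ y
        = v y * pdY i σ₁ y + σ₁ y ^ (m+1) * WfY m σ₁ w i y := by
      intro i y hy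
      rw [pdY_congr hΩ hfac hy, pdY_mul (diffAtY hΩ hσ₁ hy) (diffAtY hΩ hv hy),
        hpv i y hy, pow_succ]
      ring
    -- second derivative of σ₂
    have hdd : ∀ i, pdY i (pdY i σ₂) x
        = v x * pdY i (pdY i σ₁) x
          + σ₁ x ^ m * (((m:ℝ)+2) * WfY m σ₁ w i x * pdY i σ₁ x
            + σ₁ x * pdY i (WfY m σ₁ w i) x) := by
      intro i
      have h1 : pdY i (pdY i σ₂) x
          = pdY i (fun y => v y * pdY i σ₁ y + σ₁ y ^ (m+1) * WfY m σ₁ w i y) x :=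
        pdY_congr hΩ (hp2 i) hx
      rw [h1, pdY_add (diffAtY hΩ (hv.mul (pdY_contDiffOn hΩ hσ₁)) hx)
          (diffAtY hΩ ((hσ₁.pow (m+1)).mul (hWf i)) hx),
        pdY_mul (diffAtY hΩ hv hx) (diffAtY hΩ (pdY_contDiffOn hΩ hσ₁) hx),
        pdY_pow_mul hΩ hσ₁ (hWf i) m hx, hpv i x hx]
      ring
    -- sum expansions
    have hsum1 : (∑ i : Fin d, (pdY i σ₂ x) ^ 2)
        = v x ^ 2 * (∑ i : Fin d, (pdY i σ₁ x) ^ 2)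
          + 2 * v x * σ₁ x ^ (m+1) * (∑ i : Fin d, pdY i σ₁ x * WfY m σ₁ w i x)
          + (σ₁ x ^ (m+1)) ^ 2 * (∑ i : Fin d, (WfY m σ₁ w i x) ^ 2) := by
      calc (∑ i : Fin d, (pdY i σ₂ x) ^ 2)
          = ∑ i : Fin d, (v x * pdY i σ₁ x + σ₁ x ^ (m+1) * WfY m σ₁ w i x) ^ 2 :=
            Finset.sum_congr rfl fun i _ => by rw [hp2 i x hx]
        _ = _ := by
            simp only [Finset.mul_sum, ← Finset.sum_add_distrib]
            try exact Finset.sum_congr rfl fun i _ => by ring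
    have hsum2 : (∑ i : Fin d, pdY i (pdY i σ₂) x)
        = v x * (∑ i : Fin d, pdY i (pdY i σ₁) x)
          + σ₁ x ^ m * (((m:ℝ)+2) * (∑ i : Fin d, pdY i σ₁ x * WfY m σ₁ w i x)
            + σ₁ x * (∑ i : Fin d, pdY i (WfY m σ₁ w i) x)) := by
      calc (∑ i : Fin d, pdY i (pdY i σ₂) x)
          = ∑ i : Fin d, (v x * pdY i (pdY i σ₁) x
              + σ₁ x ^ m * (((m:ℝ)+2) * (pdY i σ₁ x * WfY m σ₁ w i x)
                + σ₁ x * pdY i (WfY m σ₁ w i) x)) :=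
            Finset.sum_congr rfl fun i _ => by rw [hdd i]; ring
        _ = _ := by
            simp only [Finset.mul_sum, ← Finset.sum_add_distrib]
            try exact Finset.sum_congr rfl fun i _ => by ring
    have hsum3 : (∑ i : Fin d, pdY i σ₁ x * WfY m σ₁ w i x)
        = ((m:ℝ)+1) * w x * (∑ i : Fin d, (pdY i σ₁ x) ^ 2)
          + σ₁ x * (∑ i : Fin d, pdY i σ₁ x * pdY i w x) := by
      calc (∑ i : Fin d, pdY i σ₁ x * WfY m σ₁ w i x)
          = ∑ i : Fin d, (((m:ℝ)+1) * w x * (pdY i σ₁ x) ^ 2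
              + σ₁ x * (pdY i σ₁ x * pdY i w x)) :=
            Finset.sum_congr rfl fun i _ => by unfold WfY; ring
        _ = _ := by
            simp only [Finset.mul_sum, ← Finset.sum_add_distrib]
            try exact Finset.sum_congr rfl fun i _ => by ring
    -- the two Yamabe equations
    have hY1 : (∑ i : Fin d, (pdY i σ₁ x) ^ 2)
        - 2 / (d : ℝ) * σ₁ x * (∑ i : Fin d, pdY i (pdY i σ₁) x) = 1 + σ₁ x ^ d * B₁ x := by
      have h := h₁ x hx
      rw [SY_eq hΩ hσ₁ hx] at h
      exact h
    have hY2 : (∑ i : Fin d, (pdY i σ₂ x) ^ 2)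
        - 2 / (d : ℝ) * σ₂ x * (∑ i : Fin d, pdY i (pdY i σ₂) x) = 1 + σ₂ x ^ d * B₂ x := by
      have h := h₂ x hx
      rw [SY_eq hΩ hσ₂ hx] at h
      exact h
    rw [hsum1, hsum2] at hY2
    rw [hsum3] at hY2
    rw [hfac x hx, mul_pow] at hY2
    obtain ⟨Vd, hVd⟩ : ∃ t : ℝ, v x ^ d = t := ⟨_, rfl⟩
    rw [hVd] at hY2
    have hvx : v x = 1 + σ₁ x ^ m * σ₁ x * w x := by rw [hvw x hx, pow_succ]
    rw [hvx] at hY2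
    have e1 : σ₁ x ^ (m+1) = σ₁ x ^ m * σ₁ x := pow_succ _ _
    rw [e1] at hY2
    have e2 : σ₁ x ^ d = σ₁ x ^ m * σ₁ x ^ 2 * σ₁ x ^ (d-m-2) := by
      rw [← pow_add, ← pow_add]
      congr 1
      omega
    rw [e2] at hY1 hY2
    have key : σ₁ x ^ m * σ₁ x *
        ((2 + 2*((m:ℝ)+1) - 2/(d:ℝ)*((m:ℝ)+2)*((m:ℝ)+1)) * w x
          + σ₁ x *
          ((1 + σ₁ x ^ m * σ₁ x * w x) *
            (-(2/(d:ℝ)) * (∑ i : Fin d, pdY i (WfY m σ₁ w i) x)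
              + (2-2/(d:ℝ)*((m:ℝ)+2)) * (∑ i : Fin d, pdY i σ₁ x * pdY i w x)
              + ((m:ℝ)+1)*(2-2/(d:ℝ)*((m:ℝ)+2))*(2/(d:ℝ)) * w x
                * (∑ i : Fin d, pdY i (pdY i σ₁) x))
          + σ₁ x ^ (d-m-2) * (B₁ x - Vd * B₂ x)
          + σ₁ x ^ m * (∑ i : Fin d, (WfY m σ₁ w i x) ^ 2)
          + (((m:ℝ)+1)*(2-2/(d:ℝ)*((m:ℝ)+2))+1) * σ₁ x ^ m * w x ^ 2
              * (1 + σ₁ x ^ 2 * σ₁ x ^ m * σ₁ x ^ (d-m-2) * B₁ x)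
          + ((m:ℝ)+2)*(2-2/(d:ℝ)*((m:ℝ)+1)) * σ₁ x * σ₁ x ^ m * σ₁ x ^ (d-m-2) * w x * B₁ x))
        = 0 := by
      linear_combination hY2 -
        ((1 + σ₁ x ^ m * σ₁ x * w x)^2
          + 2 * (1 + σ₁ x ^ m * σ₁ x * w x) * (σ₁ x ^ m * σ₁ x) * ((m:ℝ)+1) * w x
          - 2/(d:ℝ) * σ₁ x * (1 + σ₁ x ^ m * σ₁ x * w x) * σ₁ x ^ m
            * ((m:ℝ)+2) * ((m:ℝ)+1) * w x) * hY1
    beta_reduce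
    rw [hVd]
    rcases eq_or_ne (σ₁ x) 0 with hz | hz
    · rw [hvw x hx, hz]
      simp
    · have hne : σ₁ x ^ m * σ₁ x ≠ 0 := mul_ne_zero (pow_ne_zero _ hz) hz
      have h5 := (mul_eq_zero.mp key).resolve_left hne
      have hpow : σ₁ x ^ (m+2) = σ₁ x ^ m * σ₁ x * σ₁ x := by
        rw [pow_succ, pow_succ]
      rw [hvx, hpow, ← sub_eq_iff_eq_add', eq_comm]
      rw [← mul_div_assoc, ← neg_div, div_eq_iff hc0]
      linear_combination (-(σ₁ x ^ m * σ₁ x)) * h5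

/-- Uniqueness part of Theorem 4.6 (flat background): if `σ₁` and `σ₂ = σ₁·v` (with `v`
smooth and everywhere positive) are both conformal unit defining densities
(`S(σᵢ) = 1 + σᵢ^d·Bᵢ` on `Ω`), then `σ₂ = σ₁ + σ₁^(d+1)·φ` for a smooth function `φ`. -/
theorem conformal_unit_defining_density_unique
    (d : ℕ) (hd : 3 ≤ d) (Ω : Set (EuclideanSpace ℝ (Fin d))) (hΩ : IsOpen Ω)
    (σ₁ σ₂ v : EuclideanSpace ℝ (Fin d) → ℝ)
    (hσ₁ : ContDiffOn ℝ (⊤ : ℕ∞) σ₁ Ω) (hσ₂ : ContDiffOn ℝ (⊤ : ℕ∞) σ₂ Ω)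
    (hv : ContDiffOn ℝ (⊤ : ℕ∞) v Ω) (hvpos : ∀ x ∈ Ω, 0 < v x)
    (hfac : ∀ x ∈ Ω, σ₂ x = σ₁ x * v x)
    (B₁ B₂ : EuclideanSpace ℝ (Fin d) → ℝ)
    (hB₁ : ContDiffOn ℝ (⊤ : ℕ∞) B₁ Ω) (hB₂ : ContDiffOn ℝ (⊤ : ℕ∞) B₂ Ω)
    (h₁ : ∀ x ∈ Ω, singularYamabeS σ₁ x = 1 + σ₁ x ^ d * B₁ x)
    (h₂ : ∀ x ∈ Ω, singularYamabeS σ₂ x = 1 + σ₂ x ^ d * B₂ x) :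
    ∃ φ : EuclideanSpace ℝ (Fin d) → ℝ, ContDiffOn ℝ (⊤ : ℕ∞) φ Ω ∧
      ∀ x ∈ Ω, σ₂ x = σ₁ x + σ₁ x ^ (d + 1) * φ x := by
  have main : ∀ n : ℕ, n + 1 ≤ d →
      ∃ w : EuclideanSpace ℝ (Fin d) → ℝ, ContDiffOn ℝ (⊤ : ℕ∞) w Ω ∧
        ∀ x ∈ Ω, v x = 1 + σ₁ x ^ (n+1) * w x := by
    intro n
    induction n with
    | zero =>
      intro _
      simpa using yamabe_base hd hΩ hσ₁ hσ₂ hv hvpos hfac hB₁ hB₂ h₁ h₂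
    | succ k ih =>
      intro hk
      obtain ⟨w, hw, hvw⟩ := ih (by omega)
      exact yamabe_step hd k hk hΩ hσ₁ hσ₂ hv hfac hB₁ hB₂ h₁ h₂ hw hvw
  obtain ⟨w, hw, hvw⟩ := main (d-1) (by omega)
  have hde : d - 1 + 1 = d := by omega
  rw [hde] at hvw
  refine ⟨w, hw, fun x hx => ?_⟩
  rw [hfac x hx, hvw x hx, pow_succ]
  ring
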